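/- For every p ∈ P^G there exists a unique z(p) ∈ ℝ^N with ĝ_n(z(p)_n) = p_n/(1 − Σ_{l=1}^N p_l) for all n, and this z(p) satisfies p_n = ĝ_n(z(p)_n)/(1 + Σ_{l=1}^N ĝ_l(z(p)_l)) for all n. Moreover, the function p ↦ Σ_{n=1}^N p_n·z(p)_n is strictly concave on P^G. -/

import Mathlib

open Real

/-- `G^n(Y^n | z, a^n, b^n) = G^n((exp(a_i − b_i (z + c_i)))_{i ∈ V_n})` where the
partition `V_n = {i | part i = n}`. -/
noncomputable def GzP (m N : ℕ) (part : Fin m → Fin N)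
    (Gn : ∀ n : Fin N, ({i : Fin m // part i = n} → ℝ) → ℝ)
    (c : Fin m → ℝ) (n : Fin N) (z : ℝ)
    (ab : ({i : Fin m // part i = n} → ℝ) × ({i : Fin m // part i = n} → ℝ)) : ℝ :=
  Gn n fun i => Real.exp (ab.1 i - ab.2 i * (z + c i.1))

/-- `ĝ_n(z) = min_{(a^n, b^n) ∈ A^n} G^n(Y^n | z, a^n, b^n)`. -/
noncomputable def ghatP (m N : ℕ) (part : Fin m → Fin N)
    (Gn : ∀ n : Fin N, ({i : Fin m // part i = n} → ℝ) → ℝ)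
    (c : Fin m → ℝ)
    (An : ∀ n : Fin N,
      Set (({i : Fin m // part i = n} → ℝ) × ({i : Fin m // part i = n} → ℝ)))
    (n : Fin N) (z : ℝ) : ℝ :=
  sInf (GzP m N part Gn c n z '' An n)

lemma aux_open {ι : Type*} [Fintype ι] : IsOpen {Y : ι → ℝ | ∀ i, 0 < Y i} := by
  have h : {Y : ι → ℝ | ∀ i, 0 < Y i} = ⋂ i, {Y : ι → ℝ | 0 < Y i} := by
    ext Y; simp [Set.mem_iInter]
  rw [h]
  exact isOpen_iInter_of_finite fun i => isOpen_lt continuous_const (continuous_apply i)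

lemma aux_Gpos {ι : Type*} [Fintype ι] [Nonempty ι] [DecidableEq ι] (G : (ι → ℝ) → ℝ)
    (hsmooth : ContDiffOn ℝ 2 G {Y : ι → ℝ | ∀ i, 0 < Y i})
    (hhom : ∀ lam : ℝ, 0 < lam → ∀ Y : ι → ℝ, (∀ i, 0 < Y i) → G (lam • Y) = lam * G Y)
    (hd1 : ∀ Y : ι → ℝ, (∀ i, 0 < Y i) → ∀ i, 0 < fderiv ℝ G Y (Pi.single i 1))
    (Y : ι → ℝ) (hY : ∀ i, 0 < Y i) : 0 < G Y := by
  have hdiff : ∀ W : ι → ℝ, (∀ i, 0 < W i) → DifferentiableAt ℝ G W := fun W hW =>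
    (hsmooth.differentiableOn (by norm_num)).differentiableAt (aux_open.mem_nhds hW)
  have key : ∀ W : ι → ℝ, (∀ i, 0 < W i) → 0 < fderiv ℝ G W Y := by
    intro W hW
    have hY' : (fderiv ℝ G W) Y = ∑ i, Y i * fderiv ℝ G W (Pi.single i 1) := by
      conv_lhs => rw [← Finset.univ_sum_single Y]
      rw [map_sum]
      refine Finset.sum_congr rfl fun i _ => ?_
      have : Pi.single i (Y i) = Y i • (Pi.single i (1:ℝ) : ι → ℝ) := by
        rw [← Pi.single_smul', smul_eq_mul, mul_one]
      rw [this, map_smul, smul_eq_mul]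
    rw [hY']
    exact Finset.sum_pos (fun i _ => mul_pos (hY i) (hd1 W hW i)) Finset.univ_nonempty
  set F : ℝ → ℝ := fun t => G (Y + t • Y) with hF
  have hder : ∀ t ∈ Set.Icc (0:ℝ) 1, HasDerivAt F (fderiv ℝ G (Y + t • Y) Y) t := by
    intro t ht
    have hpos : ∀ i, 0 < (Y + t • Y) i := by
      intro i
      have := hY i
      simp only [Pi.add_apply, Pi.smul_apply, smul_eq_mul]
      nlinarith [ht.1]
    have hinner : HasDerivAt (fun s : ℝ => Y + s • Y) Y t := by
      simpa using ((hasDerivAt_id t).smul_const Y).const_add Y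
    exact ((hdiff _ hpos).hasFDerivAt.comp_hasDerivAt t hinner)
  have hmono : StrictMonoOn F (Set.Icc (0:ℝ) 1) := by
    apply strictMonoOn_of_deriv_pos (convex_Icc 0 1)
    · exact fun t ht => ((hder t ht).continuousAt).continuousWithinAt
    · intro t ht
      rw [interior_Icc] at ht
      rw [(hder t ⟨ht.1.le, ht.2.le⟩).deriv]
      refine key _ fun i => ?_
      have := hY i
      simp only [Pi.add_apply, Pi.smul_apply, smul_eq_mul]
      nlinarith [ht.1]
  have h01 : F 0 < F 1 := hmono (Set.left_mem_Icc.2 zero_le_one) (Set.right_mem_Icc.2 zero_le_one) zero_lt_one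
  have hF0 : F 0 = G Y := by simp [hF]
  have hF1 : F 1 = 2 * G Y := by
    have : Y + (1:ℝ) • Y = (2:ℝ) • Y := by rw [one_smul, two_smul]
    rw [hF]; simp only [this]
    exact hhom 2 two_pos Y hY
  rw [hF0, hF1] at h01
  linarith

lemma aux_phi (B : Set (ℝ × ℝ)) (hBc : IsCompact B) (hBne : B.Nonempty)
    (hβ : ∀ x ∈ B, 0 < x.2) :
    StrictAnti (fun z : ℝ => sInf ((fun x : ℝ × ℝ => x.1 - x.2 * z) '' B)) ∧
    (∀ t : ℝ, ∃ z : ℝ, sInf ((fun x : ℝ × ℝ => x.1 - x.2 * z) '' B) = t) ∧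
    (∀ z : ℝ, ∃ x ∈ B,
      sInf ((fun x' : ℝ × ℝ => x'.1 - x'.2 * z) '' B) = x.1 - x.2 * z ∧
      ∀ w : ℝ, sInf ((fun x' : ℝ × ℝ => x'.1 - x'.2 * w) '' B) ≤ x.1 - x.2 * w) := by
  set ψ : ℝ → ℝ := fun z => sInf ((fun x : ℝ × ℝ => x.1 - x.2 * z) '' B) with hψ
  have hcompim : ∀ z : ℝ, IsCompact ((fun x : ℝ × ℝ => x.1 - x.2 * z) '' B) := fun z =>
    hBc.image (by fun_prop)
  have hneim : ∀ z : ℝ, ((fun x : ℝ × ℝ => x.1 - x.2 * z) '' B).Nonempty := fun z =>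
    hBne.image _
  have hbdd : ∀ z : ℝ, BddBelow ((fun x : ℝ × ℝ => x.1 - x.2 * z) '' B) := fun z =>
    (hcompim z).bddBelow
  have hle : ∀ z : ℝ, ∀ x ∈ B, ψ z ≤ x.1 - x.2 * z := fun z x hx =>
    csInf_le (hbdd z) ⟨x, hx, rfl⟩
  have hattain : ∀ z : ℝ, ∃ x ∈ B, ψ z = x.1 - x.2 * z := by
    intro z
    have := (hcompim z).sInf_mem (hneim z)
    obtain ⟨x, hx, hxe⟩ := this
    exact ⟨x, hx, hxe.symm⟩
  have hanti : StrictAnti ψ := by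
    intro z1 z2 h12
    obtain ⟨x, hx, hxe⟩ := hattain z1
    calc ψ z2 ≤ x.1 - x.2 * z2 := hle z2 x hx
      _ < x.1 - x.2 * z1 := by nlinarith [hβ x hx]
      _ = ψ z1 := hxe.symm
  refine ⟨hanti, ?_, ?_⟩
  · -- surjectivity
    -- continuity via Lipschitz
    obtain ⟨M, hM⟩ : ∃ M : ℝ, ∀ x ∈ B, x.2 ≤ M := by
      obtain ⟨M, hM⟩ := (hBc.image continuous_snd).bddAbove
      exact ⟨M, fun x hx => hM ⟨x, hx, rfl⟩⟩
    obtain ⟨x0, hx0⟩ := id hBne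
    have hM0 : 0 < M := lt_of_lt_of_le (hβ x0 hx0) (hM x0 hx0)
    have hlip : ∀ z w : ℝ, ψ z ≤ ψ w + M * |w - z| := by
      intro z w
      obtain ⟨x, hx, hxe⟩ := hattain w
      calc ψ z ≤ x.1 - x.2 * z := hle z x hx
        _ = (x.1 - x.2 * w) + x.2 * (w - z) := by ring
        _ ≤ ψ w + M * |w - z| := by
            rw [hxe]
            have h1 : x.2 * (w - z) ≤ x.2 * |w - z| :=
              mul_le_mul_of_nonneg_left (le_abs_self _) (hβ x hx).le
            have h2 : x.2 * |w - z| ≤ M * |w - z| :=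
              mul_le_mul_of_nonneg_right (hM x hx) (abs_nonneg _)
            linarith
    have hcont : Continuous ψ := by
      refine (LipschitzWith.of_dist_le_mul (K := Real.toNNReal M) (f := ψ) ?_).continuous
      intro z w
      rw [Real.dist_eq, Real.dist_eq, Real.coe_toNNReal M hM0.le]
      have h1 := hlip z w
      have h2 := hlip w z
      rw [abs_sub_comm] at h1
      rw [abs_sub_le_iff]
      exact ⟨by linarith, by linarith⟩
    intro t
    have hx02 : 0 < x0.2 := hβ x0 hx0
    set z1 : ℝ := (x0.1 - t) / x0.2 + 1 with hz1def
    have hz1 : ψ z1 < t := by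
      have h1 : ψ z1 ≤ x0.1 - x0.2 * z1 := hle z1 x0 hx0
      have h2 : x0.1 - x0.2 * z1 = t - x0.2 := by
        rw [hz1def]; field_simp; ring
      linarith
    -- lower bounds
    obtain ⟨xm, hxm, hxme⟩ : ∃ x ∈ B, sInf (Prod.snd '' B) = x.2 := by
      have := (hBc.image continuous_snd).sInf_mem (Set.Nonempty.image _ hBne)
      obtain ⟨x, hx, hxe⟩ := this
      exact ⟨x, hx, hxe.symm⟩
    set βmin : ℝ := sInf (Prod.snd '' B) with hβmindef
    have hβminpos : 0 < βmin := hxme ▸ hβ xm hxm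
    have hβminle : ∀ x ∈ B, βmin ≤ x.2 := fun x hx =>
      csInf_le (hBc.image continuous_snd).bddBelow ⟨x, hx, rfl⟩
    obtain ⟨mL, hmL⟩ : ∃ mL : ℝ, ∀ x ∈ B, mL ≤ x.1 := by
      obtain ⟨mL, hmL⟩ := (hBc.image continuous_fst).bddBelow
      exact ⟨mL, fun x hx => hmL ⟨x, hx, rfl⟩⟩
    set z2 : ℝ := min 0 ((mL - t - 1) / βmin) with hz2def
    have hz2a : z2 ≤ 0 := min_le_left _ _
    have hz2b : βmin * z2 ≤ mL - t - 1 := by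
      have := min_le_right 0 ((mL - t - 1) / βmin)
      calc βmin * z2 ≤ βmin * ((mL - t - 1) / βmin) :=
            mul_le_mul_of_nonneg_left this hβminpos.le
        _ = mL - t - 1 := by field_simp
    have hz2 : t < ψ z2 := by
      obtain ⟨x, hx, hxe⟩ := hattain z2
      have h1 : mL ≤ x.1 := hmL x hx
      have h2 : βmin ≤ x.2 := hβminle x hx
      have h3 : x.2 * z2 ≤ βmin * z2 := by nlinarith
      rw [hxe]; linarith
    have hz21 : z2 < z1 := by
      by_contra h
      push_neg at h
      exact absurd (hanti.antitone h) (by linarith)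
    have := intermediate_value_Icc' hz21.le hcont.continuousOn
    obtain ⟨z, _, hz⟩ := this ⟨hz1.le, hz2.le⟩
    exact ⟨z, hz⟩
  · intro z
    obtain ⟨x, hx, hxe⟩ := hattain z
    exact ⟨x, hx, hxe, fun w => hle w x hx⟩

lemma aux_entropy_key (a b x1 y1 x2 y2 : ℝ) (ha : 0 < a) (hb : 0 < b) (hab : a + b = 1)
    (hx1 : 0 < x1) (hy1 : 0 < y1) (hx2 : 0 < x2) (hy2 : 0 < y2)
    (hkey : ((a * x1 + b * x2) / (a * y1 + b * y2)) *
        Real.log ((a * x1 + b * x2) / (a * y1 + b * y2)) ≤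
      (a * y1 / (a * y1 + b * y2)) * ((x1 / y1) * Real.log (x1 / y1)) +
      (b * y2 / (a * y1 + b * y2)) * ((x2 / y2) * Real.log (x2 / y2))) :
    (a * x1 + b * x2) * Real.log (a * x1 + b * x2) -
        (a * x1 + b * x2) * Real.log (a * y1 + b * y2) ≤
      a * (x1 * Real.log x1 - x1 * Real.log y1) +
        b * (x2 * Real.log x2 - x2 * Real.log y2) := by
  have hs : 0 < a * y1 + b * y2 := by positivity
  have hT : 0 < a * x1 + b * x2 := by positivity
  have h := mul_le_mul_of_nonneg_left hkey hs.le
  rw [Real.log_div hT.ne' hs.ne', Real.log_div hx1.ne' hy1.ne',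
    Real.log_div hx2.ne' hy2.ne'] at h
  have e1 : (a * y1 + b * y2) * (((a * x1 + b * x2) / (a * y1 + b * y2)) *
      (Real.log (a * x1 + b * x2) - Real.log (a * y1 + b * y2))) =
      (a * x1 + b * x2) * Real.log (a * x1 + b * x2) -
        (a * x1 + b * x2) * Real.log (a * y1 + b * y2) := by
    field_simp
  have e2 : (a * y1 + b * y2) * ((a * y1 / (a * y1 + b * y2)) *
      ((x1 / y1) * (Real.log x1 - Real.log y1)) +
      (b * y2 / (a * y1 + b * y2)) * ((x2 / y2) * (Real.log x2 - Real.log y2))) =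
      a * (x1 * Real.log x1 - x1 * Real.log y1) +
        b * (x2 * Real.log x2 - x2 * Real.log y2) := by
    field_simp
  rw [e1, e2] at h
  exact h

lemma aux_entropy_le (a b x1 y1 x2 y2 : ℝ) (ha : 0 < a) (hb : 0 < b) (hab : a + b = 1)
    (hx1 : 0 < x1) (hy1 : 0 < y1) (hx2 : 0 < x2) (hy2 : 0 < y2) :
    (a * x1 + b * x2) * Real.log (a * x1 + b * x2) -
        (a * x1 + b * x2) * Real.log (a * y1 + b * y2) ≤
      a * (x1 * Real.log x1 - x1 * Real.log y1) +
        b * (x2 * Real.log x2 - x2 * Real.log y2) := by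
  have hs : 0 < a * y1 + b * y2 := by positivity
  have hw1 : 0 ≤ a * y1 / (a * y1 + b * y2) := by positivity
  have hw2 : 0 ≤ b * y2 / (a * y1 + b * y2) := by positivity
  have hwsum : a * y1 / (a * y1 + b * y2) + b * y2 / (a * y1 + b * y2) = 1 := by
    field_simp
  have hconv := Real.convexOn_mul_log.2 (Set.mem_Ici.2 (by positivity : (0:ℝ) ≤ x1 / y1))
    (Set.mem_Ici.2 (by positivity : (0:ℝ) ≤ x2 / y2)) hw1 hw2 hwsum
  simp only [smul_eq_mul] at hconv
  have harg : a * y1 / (a * y1 + b * y2) * (x1 / y1) +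
      b * y2 / (a * y1 + b * y2) * (x2 / y2) = (a * x1 + b * x2) / (a * y1 + b * y2) := by
    field_simp
  rw [harg] at hconv
  exact aux_entropy_key a b x1 y1 x2 y2 ha hb hab hx1 hy1 hx2 hy2 hconv

lemma aux_entropy_lt (a b x1 y1 x2 y2 : ℝ) (ha : 0 < a) (hb : 0 < b) (hab : a + b = 1)
    (hx1 : 0 < x1) (hy1 : 0 < y1) (hx2 : 0 < x2) (hy2 : 0 < y2)
    (hne : x1 * y2 ≠ x2 * y1) :
    (a * x1 + b * x2) * Real.log (a * x1 + b * x2) -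
        (a * x1 + b * x2) * Real.log (a * y1 + b * y2) <
      a * (x1 * Real.log x1 - x1 * Real.log y1) +
        b * (x2 * Real.log x2 - x2 * Real.log y2) := by
  have hs : 0 < a * y1 + b * y2 := by positivity
  have hw1 : 0 < a * y1 / (a * y1 + b * y2) := by positivity
  have hw2 : 0 < b * y2 / (a * y1 + b * y2) := by positivity
  have hwsum : a * y1 / (a * y1 + b * y2) + b * y2 / (a * y1 + b * y2) = 1 := by
    field_simp
  have htne : x1 / y1 ≠ x2 / y2 := by
    intro h
    exact hne (by field_simp at h; linarith [h])
  have hconv := Real.strictConvexOn_mul_log.2 (Set.mem_Ici.2 (by positivity : (0:ℝ) ≤ x1 / y1))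
    (Set.mem_Ici.2 (by positivity : (0:ℝ) ≤ x2 / y2)) htne hw1 hw2 hwsum
  simp only [smul_eq_mul] at hconv
  have harg : a * y1 / (a * y1 + b * y2) * (x1 / y1) +
      b * y2 / (a * y1 + b * y2) * (x2 / y2) = (a * x1 + b * x2) / (a * y1 + b * y2) := by
    field_simp
  rw [harg] at hconv
  -- strict version of aux_entropy_key
  have hT : 0 < a * x1 + b * x2 := by positivity
  have h := mul_lt_mul_of_pos_left hconv hs
  rw [Real.log_div hT.ne' hs.ne', Real.log_div hx1.ne' hy1.ne',
    Real.log_div hx2.ne' hy2.ne'] at h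
  have e1 : (a * y1 + b * y2) * (((a * x1 + b * x2) / (a * y1 + b * y2)) *
      (Real.log (a * x1 + b * x2) - Real.log (a * y1 + b * y2))) =
      (a * x1 + b * x2) * Real.log (a * x1 + b * x2) -
        (a * x1 + b * x2) * Real.log (a * y1 + b * y2) := by
    field_simp
  have e2 : (a * y1 + b * y2) * ((a * y1 / (a * y1 + b * y2)) *
      ((x1 / y1) * (Real.log x1 - Real.log y1)) +
      (b * y2 / (a * y1 + b * y2)) * ((x2 / y2) * (Real.log x2 - Real.log y2))) =
      a * (x1 * Real.log x1 - x1 * Real.log y1) +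
        b * (x2 * Real.log x2 - x2 * Real.log y2) := by
    field_simp
  rw [e1, e2] at h
  exact h


lemma exists_phi (m N : ℕ) (part : Fin m → Fin N) (hpart : ∀ n : Fin N, ∃ i, part i = n)
    (Gn : ∀ n : Fin N, ({i : Fin m // part i = n} → ℝ) → ℝ)
    (hGsmooth : ∀ n, ContDiffOn ℝ 2 (Gn n)
      {Y : {i : Fin m // part i = n} → ℝ | ∀ i, 0 < Y i})
    (hGhom : ∀ n, ∀ lam : ℝ, 0 < lam → ∀ Y : {i : Fin m // part i = n} → ℝ,
      (∀ i, 0 < Y i) → Gn n (lam • Y) = lam * Gn n Y)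
    (hGd1 : ∀ n, ∀ Y : {i : Fin m // part i = n} → ℝ, (∀ i, 0 < Y i) →
      ∀ i, 0 < fderiv ℝ (Gn n) Y (Pi.single i 1))
    (An : ∀ n : Fin N,
      Set (({i : Fin m // part i = n} → ℝ) × ({i : Fin m // part i = n} → ℝ)))
    (hAne : ∀ n, (An n).Nonempty) (hAcomp : ∀ n, IsCompact (An n))
    (hAb : ∀ n, ∀ ab ∈ An n, ∃ β : ℝ, 0 < β ∧ ∀ i, ab.2 i = β)
    (c : Fin m → ℝ) :
    ∃ φ : Fin N → ℝ → ℝ,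
      (∀ n z, ghatP m N part Gn c An n z = Real.exp (φ n z)) ∧
      (∀ n, StrictAnti (φ n)) ∧
      (∀ n (t : ℝ), ∃ z, φ n z = t) ∧
      (∀ n z, ∃ L β : ℝ, 0 < β ∧ φ n z = L - β * z ∧ ∀ w, φ n w ≤ L - β * w) := by
  have H : ∀ n : Fin N, ∃ φn : ℝ → ℝ,
      (∀ z, ghatP m N part Gn c An n z = Real.exp (φn z)) ∧
      StrictAnti φn ∧ (∀ t : ℝ, ∃ z, φn z = t) ∧
      (∀ z, ∃ L β : ℝ, 0 < β ∧ φn z = L - β * z ∧ ∀ w, φn w ≤ L - β * w) := by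
    intro n
    haveI : Nonempty {i : Fin m // part i = n} := ⟨⟨(hpart n).choose, (hpart n).choose_spec⟩⟩
    obtain ⟨i0⟩ := (inferInstance : Nonempty {i : Fin m // part i = n})
    have hGpos : ∀ Y : {i : Fin m // part i = n} → ℝ, (∀ i, 0 < Y i) → 0 < Gn n Y :=
      aux_Gpos (Gn n) (hGsmooth n) (hGhom n) (hGd1 n)
    set K : ({i : Fin m // part i = n} → ℝ) × ({i : Fin m // part i = n} → ℝ) → ℝ :=
      fun ab => Gn n (fun i => Real.exp (ab.1 i - ab.2 i * c i.1)) with hKdef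
    have hβprop : ∀ ab ∈ An n, (0 < ab.2 i0) ∧ ∀ i, ab.2 i = ab.2 i0 := by
      intro ab hab
      obtain ⟨β', hβ', hall⟩ := hAb n ab hab
      exact ⟨(hall i0) ▸ hβ', fun i => (hall i).trans (hall i0).symm⟩
    have hKpos : ∀ ab, 0 < K ab := fun ab => hGpos _ (fun i => Real.exp_pos _)
    have hGzP : ∀ (z : ℝ), ∀ ab ∈ An n, GzP m N part Gn c n z ab
        = Real.exp (Real.log (K ab) - ab.2 i0 * z) := by
      intro z ab hab
      obtain ⟨hb, hball⟩ := hβprop ab hab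
      have hvec : (fun i : {i : Fin m // part i = n} =>
            Real.exp (ab.1 i - ab.2 i * (z + c i.1)))
          = Real.exp (-(ab.2 i0 * z)) • (fun i => Real.exp (ab.1 i - ab.2 i * c i.1)) := by
        funext i
        simp only [Pi.smul_apply, smul_eq_mul, ← Real.exp_add]
        congr 1
        rw [hball i]
        ring
      show Gn n _ = _
      rw [hvec, hGhom n _ (Real.exp_pos _) _ (fun i => Real.exp_pos _)]
      rw [Real.exp_sub, Real.exp_log (hKpos ab), Real.exp_neg, hKdef]
      rw [div_eq_mul_inv]
      ring
    -- build B
    set B : Set (ℝ × ℝ) := (fun ab => (Real.log (K ab), ab.2 i0)) '' An n with hBdef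
    have hKcont : Continuous K := by
      rw [continuous_iff_continuousAt]
      intro ab
      have hinner : Continuous (fun ab : ({i : Fin m // part i = n} → ℝ) ×
          ({i : Fin m // part i = n} → ℝ) =>
          (fun i : {i : Fin m // part i = n} => Real.exp (ab.1 i - ab.2 i * c i.1))) := by
        refine continuous_pi fun i => Real.continuous_exp.comp ?_
        exact ((continuous_apply i).comp continuous_fst).sub
          (((continuous_apply i).comp continuous_snd).mul continuous_const)
      exact ContinuousAt.comp
        ((hGsmooth n).continuousOn.continuousAt
          (aux_open.mem_nhds (fun i => Real.exp_pos _))) hinner.continuousAt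
    have hpairc : Continuous (fun ab : ({i : Fin m // part i = n} → ℝ) ×
        ({i : Fin m // part i = n} → ℝ) => (Real.log (K ab), ab.2 i0)) := by
      refine Continuous.prodMk ?_ ((continuous_apply i0).comp continuous_snd)
      rw [continuous_iff_continuousAt]
      intro ab
      exact (Real.continuousAt_log (hKpos ab).ne').comp hKcont.continuousAt
    have hBc : IsCompact B := (hAcomp n).image hpairc
    have hBne : B.Nonempty := (hAne n).image _
    have hβB : ∀ x ∈ B, 0 < x.2 := by
      rintro x ⟨ab, hab, rfl⟩
      exact (hβprop ab hab).1
    obtain ⟨hanti, hsurj, hattain⟩ := aux_phi B hBc hBne hβB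
    refine ⟨fun z => sInf ((fun x : ℝ × ℝ => x.1 - x.2 * z) '' B), ?_, hanti, hsurj, ?_⟩
    · intro z
      have hbddg : BddBelow (GzP m N part Gn c n z '' An n) := by
        refine ⟨0, ?_⟩
        rintro y ⟨ab, hab, rfl⟩
        rw [hGzP z ab hab]
        positivity
      apply le_antisymm
      · obtain ⟨x, hxB, hxe, -⟩ := hattain z
        obtain ⟨ab, hab, rfl⟩ := hxB
        refine csInf_le hbddg ⟨ab, hab, ?_⟩
        rw [hGzP z ab hab]
        exact (congrArg Real.exp hxe).symm
      · refine le_csInf ((hAne n).image _) ?_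
        rintro y ⟨ab, hab, rfl⟩
        rw [hGzP z ab hab]
        refine Real.exp_le_exp.2 ?_
        refine csInf_le ((hBc.image (by fun_prop)).bddBelow) ?_
        exact ⟨(Real.log (K ab), ab.2 i0), ⟨ab, hab, rfl⟩, rfl⟩
    · intro z
      obtain ⟨x, hxB, hxe, hsupp⟩ := hattain z
      exact ⟨x.1, x.2, hβB x hxB, hxe, hsupp⟩
  choose φ h1 h2 h3 h4 using H
  exact ⟨φ, h1, h2, h3, h4⟩

/-- For every `p` in the open simplex `P^G` there is a unique
`z(p)` with `ĝ_n(z(p)_n) = p_n/(1 − Σ_l p_l)` for all `n`; it satisfies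
`p_n = ĝ_n(z(p)_n)/(1 + Σ_l ĝ_l(z(p)_l))`, and `p ↦ Σ_n p_n z(p)_n` is strictly
concave on `P^G`. -/
theorem stmt_8
    (m N : ℕ) (hN : 1 ≤ N)
    (part : Fin m → Fin N) (hpart : ∀ n : Fin N, ∃ i, part i = n)
    (Gn : ∀ n : Fin N, ({i : Fin m // part i = n} → ℝ) → ℝ)
    (hGnonneg : ∀ n, ∀ Y : {i : Fin m // part i = n} → ℝ,
      (∀ i, 0 < Y i) → 0 ≤ Gn n Y)
    (hGsmooth : ∀ n, ContDiffOn ℝ 2 (Gn n)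
      {Y : {i : Fin m // part i = n} → ℝ | ∀ i, 0 < Y i})
    (hGhom : ∀ n, ∀ lam : ℝ, 0 < lam → ∀ Y : {i : Fin m // part i = n} → ℝ,
      (∀ i, 0 < Y i) → Gn n (lam • Y) = lam * Gn n Y)
    (hGd1 : ∀ n, ∀ Y : {i : Fin m // part i = n} → ℝ, (∀ i, 0 < Y i) →
      ∀ i, 0 < fderiv ℝ (Gn n) Y (Pi.single i 1))
    (hGd2 : ∀ n, ∀ Y : {i : Fin m // part i = n} → ℝ, (∀ i, 0 < Y i) →
      ∀ i j, i ≠ j →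
        fderiv ℝ (fun W => fderiv ℝ (Gn n) W (Pi.single i 1)) Y (Pi.single j 1) ≤ 0)
    (An : ∀ n : Fin N,
      Set (({i : Fin m // part i = n} → ℝ) × ({i : Fin m // part i = n} → ℝ)))
    (hAne : ∀ n, (An n).Nonempty) (hAconv : ∀ n, Convex ℝ (An n))
    (hAcomp : ∀ n, IsCompact (An n))
    (hAb : ∀ n, ∀ ab ∈ An n, ∃ β : ℝ, 0 < β ∧ ∀ i, ab.2 i = β)
    (c : Fin m → ℝ) (hc : ∀ i, 0 ≤ c i) :
    (∀ p : Fin N → ℝ, (∀ n, 0 < p n) → (∑ n, p n) < 1 →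
      ∃! z : Fin N → ℝ, ∀ n,
        ghatP m N part Gn c An n (z n) = p n / (1 - ∑ l, p l)) ∧
    (∀ Z : (Fin N → ℝ) → Fin N → ℝ,
      (∀ p : Fin N → ℝ, (∀ n, 0 < p n) → (∑ n, p n) < 1 →
        ∀ n, ghatP m N part Gn c An n (Z p n) = p n / (1 - ∑ l, p l)) →
      (∀ p : Fin N → ℝ, (∀ n, 0 < p n) → (∑ n, p n) < 1 →
        ∀ n, p n = ghatP m N part Gn c An n (Z p n) /
          (1 + ∑ l, ghatP m N part Gn c An l (Z p l))) ∧
      StrictConcaveOn ℝ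
        {p : Fin N → ℝ | (∀ n, 0 < p n) ∧ (∑ n, p n) < 1}
        (fun p : Fin N → ℝ => ∑ n, p n * Z p n)) := by
  obtain ⟨φ, hg, hanti, hsurj, hsupp⟩ :=
    exists_phi m N part hpart Gn hGsmooth hGhom hGd1 An hAne hAcomp hAb c
  constructor
  · -- Part 1: existence and uniqueness of z(p)
    intro p hp hS
    have h1S : (0:ℝ) < 1 - ∑ l, p l := by linarith
    have htpos : ∀ n, 0 < p n / (1 - ∑ l, p l) := fun n => div_pos (hp n) h1S
    have hzex : ∀ n, ∃ zn : ℝ, φ n zn = Real.log (p n / (1 - ∑ l, p l)) :=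
      fun n => hsurj n _
    choose z hz using hzex
    refine ⟨z, fun n => ?_, fun y hy => funext fun n => ?_⟩
    · rw [hg n (z n), hz n, Real.exp_log (htpos n)]
    · have h1 := hy n
      rw [hg n (y n)] at h1
      have h2 : φ n (y n) = φ n (z n) := by
        rw [hz n, ← h1, Real.log_exp]
      exact (hanti n).injective h2
  · intro Z hZ
    refine ⟨?_, ?_, ?_⟩
    · -- p_n = ghat_n / (1 + Σ ghat_l)
      intro p hp hS n
      have h1S : (0:ℝ) < 1 - ∑ l, p l := by linarith
      have key := hZ p hp hS
      simp only [key]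
      rw [← Finset.sum_div]
      have hden : (1:ℝ) + (∑ l, p l) / (1 - ∑ l, p l) = 1 / (1 - ∑ l, p l) := by
        field_simp
        ring
      rw [hden]
      field_simp
    · -- convexity of the domain
      have hset : {p : Fin N → ℝ | (∀ n, 0 < p n) ∧ (∑ n, p n) < 1}
          = (⋂ n, {p : Fin N → ℝ | 0 < p n}) ∩ {p : Fin N → ℝ | (∑ n, p n) < 1} := by
        ext p; simp [Set.mem_iInter]
      rw [hset]
      refine Convex.inter (convex_iInter fun n => ?_) ?_
      · exact convex_halfSpace_gt ⟨fun x y => rfl, fun r x => rfl⟩ 0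
      · exact convex_halfSpace_lt
          ⟨fun x y => Finset.sum_add_distrib,
           fun r x => by simp [Finset.mul_sum]⟩ 1
    · -- strict concavity inequality
      rintro p ⟨hp, hSp⟩ q ⟨hq, hSq⟩ hpq a b ha hb hab
      set p0 : ℝ := 1 - ∑ l, p l with hp0def
      set q0 : ℝ := 1 - ∑ l, q l with hq0def
      have hp0 : 0 < p0 := by rw [hp0def]; linarith
      have hq0 : 0 < q0 := by rw [hq0def]; linarith
      set r : Fin N → ℝ := a • p + b • q with hrdef
      have hr_apply : ∀ n, r n = a * p n + b * q n := fun n => rfl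
      have hrp : ∀ n, 0 < r n := fun n =>
        (hr_apply n) ▸ add_pos (mul_pos ha (hp n)) (mul_pos hb (hq n))
      have hSr : ∑ n, r n = a * ∑ n, p n + b * ∑ n, q n := by
        simp only [hr_apply]
        rw [Finset.sum_add_distrib, ← Finset.mul_sum, ← Finset.mul_sum]
      have hrS : ∑ n, r n < 1 := by
        rw [hSr]; nlinarith
      set r0 : ℝ := 1 - ∑ l, r l with hr0def
      have hr0 : 0 < r0 := by rw [hr0def]; linarith
      have hr0eq : r0 = a * p0 + b * q0 := by
        rw [hr0def, hSr, hp0def, hq0def]; linear_combination -hab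
      -- φ values
      have hφval : ∀ (x : Fin N → ℝ), (∀ n, 0 < x n) → (∑ n, x n) < 1 →
          ∀ n, φ n (Z x n) = Real.log (x n) - Real.log (1 - ∑ l, x l) := by
        intro x hx hxS n
        have h1 : (0:ℝ) < 1 - ∑ l, x l := by linarith
        have h2 := hZ x hx hxS n
        rw [hg n (Z x n)] at h2
        have h3 := congrArg Real.log h2
        rwa [Real.log_exp, Real.log_div (hx n).ne' h1.ne'] at h3
      have hφp : ∀ n, φ n (Z p n) = Real.log (p n) - Real.log p0 := hφval p hp hSp
      have hφq : ∀ n, φ n (Z q n) = Real.log (q n) - Real.log q0 := hφval q hq hSq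
      have hφr : ∀ n, φ n (Z r n) = Real.log (r n) - Real.log r0 := hφval r hrp hrS
      -- support data
      have hsup : ∀ n, ∃ L β : ℝ, 0 < β ∧ φ n (Z r n) = L - β * Z r n ∧
          ∀ w, φ n w ≤ L - β * w := fun n => hsupp n (Z r n)
      choose L β hβpos hLeq hLle using hsup
      -- per-coordinate entropy bound
      set E : Fin N → ℝ := fun n =>
        a * (p n * Real.log (p n) - p n * Real.log p0) +
        b * (q n * Real.log (q n) - q n * Real.log q0) -
        ((a * p n + b * q n) * Real.log (a * p n + b * q n) -
          (a * p n + b * q n) * Real.log r0) with hEdef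
      have hterm : ∀ n, E n / β n ≤
          r n * Z r n - (a * (p n * Z p n) + b * (q n * Z q n)) := by
        intro n
        have hβ' := hβpos n
        have key1 : β n * Z r n = L n - (Real.log (r n) - Real.log r0) := by
          have := hLeq n
          rw [hφr n] at this
          linarith
        have key2 : β n * Z p n ≤ L n - (Real.log (p n) - Real.log p0) := by
          have := hLle n (Z p n)
          rw [hφp n] at this
          linarith
        have key3 : β n * Z q n ≤ L n - (Real.log (q n) - Real.log q0) := by
          have := hLle n (Z q n)
          rw [hφq n] at this
          linarith
        have h1 : r n * Z r n =
            r n * ((L n - (Real.log (r n) - Real.log r0)) / β n) := by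
          rw [← key1]
          field_simp
        have h2 : a * (p n * Z p n) ≤
            a * p n * ((L n - (Real.log (p n) - Real.log p0)) / β n) := by
          have hz : Z p n ≤ (L n - (Real.log (p n) - Real.log p0)) / β n := by
            rw [le_div_iff₀ hβ']
            linarith [key2]
          calc a * (p n * Z p n) = a * p n * Z p n := by ring
            _ ≤ a * p n * ((L n - (Real.log (p n) - Real.log p0)) / β n) :=
                mul_le_mul_of_nonneg_left hz (mul_pos ha (hp n)).le
        have h3 : b * (q n * Z q n) ≤
            b * q n * ((L n - (Real.log (q n) - Real.log q0)) / β n) := by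
          have hz : Z q n ≤ (L n - (Real.log (q n) - Real.log q0)) / β n := by
            rw [le_div_iff₀ hβ']
            linarith [key3]
          calc b * (q n * Z q n) = b * q n * Z q n := by ring
            _ ≤ b * q n * ((L n - (Real.log (q n) - Real.log q0)) / β n) :=
                mul_le_mul_of_nonneg_left hz (mul_pos hb (hq n)).le
        have hEeq : E n / β n =
            r n * ((L n - (Real.log (r n) - Real.log r0)) / β n) -
            (a * p n * ((L n - (Real.log (p n) - Real.log p0)) / β n) +
             b * q n * ((L n - (Real.log (q n) - Real.log q0)) / β n)) := by
          rw [hEdef, hr_apply n]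
          field_simp
          ring
        rw [hEeq]
        linarith [h1, h2, h3]
      have hEnonneg : ∀ n, 0 ≤ E n := by
        intro n
        have := aux_entropy_le a b (p n) p0 (q n) q0 ha hb hab (hp n) hp0 (hq n) hq0
        rw [hEdef]
        simp only []
        rw [hr0eq]
        linarith
      -- strict coordinate
      have hstrict : ∃ n, p n * q0 ≠ q n * p0 := by
        by_contra h
        push_neg at h
        have hsum : (∑ n, p n) * q0 = (∑ n, q n) * p0 := by
          rw [Finset.sum_mul, Finset.sum_mul]
          exact Finset.sum_congr rfl fun n _ => h n
        have hp0q0 : p0 = q0 := by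
          have h1 : (1 - p0) * q0 = (1 - q0) * p0 := by
            rw [hp0def, hq0def] at hsum ⊢
            convert hsum using 2 <;> ring
          nlinarith
        apply hpq
        funext n
        have := h n
        rw [← hp0q0] at this
        exact mul_right_cancel₀ hp0.ne' this
      obtain ⟨n₀, hn₀⟩ := hstrict
      have hEpos : 0 < E n₀ := by
        have := aux_entropy_lt a b (p n₀) p0 (q n₀) q0 ha hb hab (hp n₀) hp0 (hq n₀) hq0 hn₀
        rw [hEdef]
        simp only []
        rw [hr0eq]
        linarith
      -- conclude
      have hsumpos : 0 < ∑ n, (r n * Z r n - (a * (p n * Z p n) + b * (q n * Z q n))) := by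
        refine Finset.sum_pos' (fun n _ => ?_) ⟨n₀, Finset.mem_univ n₀, ?_⟩
        · exact le_trans (div_nonneg (hEnonneg n) (hβpos n).le) (hterm n)
        · exact lt_of_lt_of_le (div_pos hEpos (hβpos n₀)) (hterm n₀)
      have hsplit : ∑ n, (r n * Z r n - (a * (p n * Z p n) + b * (q n * Z q n)))
          = (∑ n, r n * Z r n) - (a * ∑ n, p n * Z p n + b * ∑ n, q n * Z q n) := by
        rw [Finset.sum_sub_distrib, Finset.sum_add_distrib, ← Finset.mul_sum, ← Finset.mul_sum]
      rw [hsplit] at hsumpos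
      simp only [smul_eq_mul]
      linarith
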